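/- Let C ⊆ X × G be a strongly regular T_f-orbit closure and H = {g ∈ G : C·g^{-1} = C}. Then for every x ∈ X there is g_x ∈ G with vertical section C_x = {g : (x,g) ∈ C} = g_x·H, the map γ : X → G/H, γ(x) = g_x·H, is continuous, and E_x(f) = g_x·H·g_x^{-1} for every x ∈ X. -/

import Mathlib

open Topology Pointwise Set Filter

section Defs

variable {X : Type*} [TopologicalSpace X] {G : Type*} [TopologicalSpace G] [Group G]

/-- The positive-iterate part of the cocycle generated by `f` over `T`:
`f(n,x) = f(T^{n-1}x) ⋯ f(Tx) · f(x)` for `n ≥ 1` and `f(0,x) = e`. -/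
def cocycleNat (T : X ≃ₜ X) (f : X → G) : ℕ → X → G
  | 0, _ => 1
  | n + 1, x => f ((T.toEquiv ^ n) x) * cocycleNat T f n x

/-- The cocycle generated by `f` over `T`, at integer times:
`f(n,x)` as above for `n ≥ 0` and `f(n,x) = f(-n, T^n x)⁻¹` for `n < 0`. -/
def cocycle (T : X ≃ₜ X) (f : X → G) (n : ℤ) (x : X) : G :=
  if 0 ≤ n then cocycleNat T f n.toNat x
  else (cocycleNat T f (-n).toNat ((T.toEquiv ^ n) x))⁻¹

/-- The `n`-th power of the skew product `T_f` on `X × G`: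
`T_f^n (x,g) = (T^n x, f(n,x)·g)`. -/
def skewPow (T : X ≃ₜ X) (f : X → G) (n : ℤ) (p : X × G) : X × G :=
  ((T.toEquiv ^ n) p.1, cocycle T f n p.1 * p.2)

/-- The `n`-th power of the skew product `T_f` acting on `X × G/H`:
`T_f^n (x, gH) = (T^n x, f(n,x)·gH)`. -/
def skewPowQ (T : X ≃ₜ X) (f : X → G) (H : Subgroup G) (n : ℤ) (p : X × (G ⧸ H)) :
    X × (G ⧸ H) :=
  ((T.toEquiv ^ n) p.1, cocycle T f n p.1 • p.2)

/-- The local essential range `E_x(f)`: all `g ∈ G` such that for every open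
neighbourhood `U` of `x` and every open neighbourhood `V` of the identity there are
`n ∈ ℤ` and `y ∈ U ∩ T⁻ⁿU` with `f(n,y) ∈ V·g`. -/
def essRange (T : X ≃ₜ X) (f : X → G) (x : X) : Set G :=
  {g | ∀ U : Set X, IsOpen U → x ∈ U → ∀ V : Set G, IsOpen V → (1 : G) ∈ V →
    ∃ n : ℤ, ∃ y ∈ U, (T.toEquiv ^ n) y ∈ U ∧ ∃ v ∈ V, cocycle T f n y = v * g}

/-- `P_x(f)`: the vertical section at `x` of the closure of the `T_f`-orbit of `(x,e)`. -/
def Pset (T : X ≃ₜ X) (f : X → G) (x : X) : Set G :=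
  {g | (x, g) ∈ closure (Set.range fun n : ℤ => skewPow T f n (x, 1))}

/-- `𝒟(f) = {x : E_x(f) = P_x(f)}`. -/
def Dset (T : X ≃ₜ X) (f : X → G) : Set X :=
  {x | essRange T f x = Pset T f x}

/-- Topological recurrence of the cocycle generated by `f`: for every open
neighbourhood `V` of the identity of `G` and every nonempty open `U ⊆ X` there is
`n ≠ 0` with `T⁻ⁿU ∩ U ∩ {x : f(n,x) ∈ V} ≠ ∅`. -/
def IsRecurrentCocycle (T : X ≃ₜ X) (f : X → G) : Prop :=
  ∀ V : Set G, IsOpen V → (1 : G) ∈ V → ∀ U : Set X, IsOpen U → U.Nonempty →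
    ∃ n : ℤ, n ≠ 0 ∧ ∃ x ∈ U, (T.toEquiv ^ n) x ∈ U ∧ cocycle T f n x ∈ V

/-- Minimality of a homeomorphism: every orbit is dense. -/
def IsMinimal (T : X ≃ₜ X) : Prop :=
  ∀ x : X, Dense (Set.range fun n : ℤ => (T.toEquiv ^ n) x)

/-- A consistent selection of subgroups for the cocycle generated by `f`: a family of
closed subgroups `H x ⊆ E_x(f)` with `H (Tⁿx) = f(n,x)·(H x)·f(n,x)⁻¹` depending
continuously on `x` for the Fell topology. -/
structure IsConsistentSelection (T : X ≃ₜ X) (f : X → G) (H : X → Subgroup G) : Prop where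
  isClosed : ∀ x : X, IsClosed (H x : Set G)
  subset_essRange : ∀ x : X, (H x : Set G) ⊆ essRange T f x
  conj : ∀ (x : X) (n : ℤ), (H ((T.toEquiv ^ n) x) : Set G) =
    (fun h => cocycle T f n x * h * (cocycle T f n x)⁻¹) '' (H x : Set G)
  fell_compact : ∀ (x : X) (K : Set G), IsCompact K → K ∩ (H x : Set G) = ∅ →
    ∃ W ∈ 𝓝 x, ∀ y ∈ W, K ∩ (H y : Set G) = ∅
  fell_open : ∀ (x : X) (O : Set G), IsOpen O → (O ∩ (H x : Set G)).Nonempty →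
    ∃ W ∈ 𝓝 x, ∀ y ∈ W, (O ∩ (H y : Set G)).Nonempty

/-- The `T_f`-orbit closure of a point of `X × G`. -/
def orbitClosure (T : X ≃ₜ X) (f : X → G) (p : X × G) : Set (X × G) :=
  closure (Set.range fun n : ℤ => skewPow T f n p)

/-- For `C ⊆ X × G`, the set `H = {g : C·g⁻¹ = C}`, where `C·g = {(y, c·g) : (y,c) ∈ C}`. -/
def stabSet (C : Set (X × G)) : Set G :=
  {g : G | (fun p : X × G => (p.1, p.2 * g⁻¹)) '' C = C}

/-- A strongly regular orbit closure: a `T_f`-orbit closure which projects onto all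
of `X` and all of whose vertical sections are single left cosets of
`H = {g : C·g⁻¹ = C}`. -/
def IsStronglyRegularOC (T : X ≃ₜ X) (f : X → G) (C : Set (X × G)) : Prop :=
  (∃ p : X × G, C = orbitClosure T f p) ∧ Prod.fst '' C = Set.univ ∧
    ∀ x : X, ∃ gx : G, {g : G | (x, g) ∈ C} = {gx} * stabSet C

/-- A strongly regular cocycle: one whose skew product admits a strongly regular
orbit closure. -/
def IsStronglyRegularCocycle (T : X ≃ₜ X) (f : X → G) : Prop :=
  ∃ C : Set (X × G), IsStronglyRegularOC T f C

/-- A regular cocycle: some `T_f`-orbit closure projects onto all of `X`. -/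
def IsRegularCocycle (T : X ≃ₜ X) (f : X → G) : Prop :=
  ∃ p : X × G, Prod.fst '' orbitClosure T f p = Set.univ

end Defs


section Aux

variable {X : Type*} [TopologicalSpace X] {G : Type*} [TopologicalSpace G] [Group G]

lemma cocycleNat_zero' (T : X ≃ₜ X) (f : X → G) (x : X) : cocycleNat T f 0 x = 1 := rfl

lemma cocycleNat_succ' (T : X ≃ₜ X) (f : X → G) (n : ℕ) (x : X) :
    cocycleNat T f (n + 1) x = f ((T.toEquiv ^ n) x) * cocycleNat T f n x := rfl

lemma cocycleNat_add' (T : X ≃ₜ X) (f : X → G) (n m : ℕ) (x : X) :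
    cocycleNat T f (n + m) x = cocycleNat T f n ((T.toEquiv ^ m) x) * cocycleNat T f m x := by
  induction n with
  | zero => simp [cocycleNat_zero']
  | succ n ih =>
      have h1 : n + 1 + m = (n + m) + 1 := by omega
      rw [h1, cocycleNat_succ', ih, cocycleNat_succ', pow_add]
      simp [Equiv.Perm.mul_apply, mul_assoc]

lemma cocycle_zero' (T : X ≃ₜ X) (f : X → G) (x : X) : cocycle T f 0 x = 1 := by
  rw [cocycle, if_pos le_rfl]; rfl

lemma cocycle_of_nonpos (T : X ≃ₜ X) (f : X → G) {n : ℤ} (x : X) (h : n ≤ 0) :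
    cocycle T f n x = (cocycleNat T f (-n).toNat ((T.toEquiv ^ n) x))⁻¹ := by
  rcases eq_or_lt_of_le h with h0 | h0
  · subst h0
    rw [cocycle_zero']
    norm_num
    rfl
  · rw [cocycle, if_neg (by omega)]

lemma cocycle_succ' (T : X ≃ₜ X) (f : X → G) (n : ℤ) (x : X) :
    cocycle T f (n + 1) x = f ((T.toEquiv ^ n) x) * cocycle T f n x := by
  rcases le_or_gt 0 n with h | h
  · rw [cocycle, if_pos (by omega), cocycle, if_pos h]
    have h2 : (n + 1).toNat = n.toNat + 1 := by omega
    have h3 : (T.toEquiv : Equiv.Perm X) ^ n = T.toEquiv ^ n.toNat := by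
      rw [← zpow_natCast]; congr 1; omega
    rw [h2, cocycleNat_succ', h3]
  · have h1 : n ≤ 0 := by omega
    have h2 : n + 1 ≤ 0 := by omega
    rw [cocycle_of_nonpos T f x h2, cocycle_of_nonpos T f x h1]
    set y := (T.toEquiv ^ n) x with hy
    have hmn : (-n).toNat = (-(n + 1)).toNat + 1 := by omega
    have hc1 : cocycleNat T f 1 y = f y := by
      simp [cocycleNat_succ', cocycleNat_zero']
    have hA : cocycleNat T f ((-(n + 1)).toNat + 1) y
        = cocycleNat T f (-(n + 1)).toNat ((T.toEquiv ^ (1 : ℕ)) y) * f y := by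
      rw [cocycleNat_add' T f (-(n + 1)).toNat 1 y, hc1]
    have hTy : (T.toEquiv ^ (1 : ℕ)) y = (T.toEquiv ^ (n + 1)) x := by
      rw [pow_one, hy]
      have h4 : (T.toEquiv : Equiv.Perm X) ^ (n + 1) = T.toEquiv * T.toEquiv ^ n := by
        rw [add_comm, zpow_add, zpow_one]
      rw [h4, Equiv.Perm.mul_apply]
    rw [hmn, hA, hTy]
    simp [mul_inv_rev, mul_assoc]

lemma cocycle_pred' (T : X ≃ₜ X) (f : X → G) (n : ℤ) (x : X) :
    cocycle T f (n - 1) x = (f ((T.toEquiv ^ (n - 1)) x))⁻¹ * cocycle T f n x := by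
  have h := cocycle_succ' T f (n - 1) x
  rw [sub_add_cancel] at h
  rw [h, ← mul_assoc, inv_mul_cancel, one_mul]

lemma cocycle_add' (T : X ≃ₜ X) (f : X → G) (n m : ℤ) (x : X) :
    cocycle T f (n + m) x = cocycle T f n ((T.toEquiv ^ m) x) * cocycle T f m x := by
  induction n using Int.induction_on with
  | zero => rw [zero_add, cocycle_zero', one_mul]
  | succ n ih =>
      have h1 : (n : ℤ) + 1 + m = ((n : ℤ) + m) + 1 := by ring
      rw [h1, cocycle_succ', ih, cocycle_succ']
      have h2 : (T.toEquiv : Equiv.Perm X) ^ ((n : ℤ) + m)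
          = T.toEquiv ^ (n : ℤ) * T.toEquiv ^ m := zpow_add _ _ _
      rw [h2, Equiv.Perm.mul_apply, mul_assoc]
  | pred n ih =>
      have h1 : -(n : ℤ) - 1 + m = (-(n : ℤ) + m) - 1 := by ring
      rw [h1, cocycle_pred', ih, cocycle_pred']
      have h2 : (T.toEquiv : Equiv.Perm X) ^ (-(n : ℤ) + m - 1)
          = T.toEquiv ^ (-(n : ℤ) - 1) * T.toEquiv ^ m := by
        rw [← zpow_add]; congr 1; ring
      rw [h2, Equiv.Perm.mul_apply, mul_assoc]

lemma continuous_equiv_pow (T : X ≃ₜ X) (n : ℕ) : Continuous fun x => (T.toEquiv ^ n) x := by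
  induction n with
  | zero => simpa using (continuous_id' : Continuous fun x : X => x)
  | succ n ih =>
      have h : ∀ x, (T.toEquiv ^ (n + 1)) x = (T.toEquiv ^ n) (T x) := by
        intro x; rw [pow_succ, Equiv.Perm.mul_apply]; rfl
      simp only [h]
      exact ih.comp T.continuous

lemma continuous_equiv_zpow (T : X ≃ₜ X) (n : ℤ) : Continuous fun x => (T.toEquiv ^ n) x := by
  rcases le_or_gt 0 n with h | h
  · have h1 : (T.toEquiv : Equiv.Perm X) ^ n = T.toEquiv ^ n.toNat := by
      rw [← zpow_natCast]; congr 1; omega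
    rw [h1]; exact continuous_equiv_pow T _
  · obtain ⟨k, hk⟩ : ∃ k : ℕ, n = -(k : ℤ) := ⟨(-n).toNat, by omega⟩
    subst hk
    have h1 : (T.toEquiv : Equiv.Perm X) ^ (-(k : ℤ)) = (T.symm.toEquiv) ^ k := by
      rw [zpow_neg, zpow_natCast, ← inv_pow]
      rfl
    rw [h1]; exact continuous_equiv_pow T.symm _

lemma continuous_cocycleNat [IsTopologicalGroup G] (T : X ≃ₜ X) {f : X → G} (hf : Continuous f)
    (n : ℕ) : Continuous (cocycleNat T f n) := by
  induction n with
  | zero => exact continuous_const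
  | succ n ih =>
      have h : cocycleNat T f (n + 1)
          = fun x => f ((T.toEquiv ^ n) x) * cocycleNat T f n x := rfl
      rw [h]
      exact (hf.comp (continuous_equiv_pow T n)).mul ih

lemma continuous_cocycle [IsTopologicalGroup G] (T : X ≃ₜ X) {f : X → G} (hf : Continuous f)
    (n : ℤ) : Continuous (cocycle T f n) := by
  have hfun : cocycle T f n = fun x => if 0 ≤ n then cocycleNat T f n.toNat x
      else (cocycleNat T f (-n).toNat ((T.toEquiv ^ n) x))⁻¹ := rfl
  rw [hfun]
  by_cases h : 0 ≤ n
  · simp only [h, if_true]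
    exact continuous_cocycleNat T hf _
  · simp only [h, if_false]
    exact ((continuous_cocycleNat T hf _).comp (continuous_equiv_zpow T n)).inv

lemma continuous_skewPow [IsTopologicalGroup G] (T : X ≃ₜ X) {f : X → G} (hf : Continuous f)
    (n : ℤ) : Continuous (skewPow T f n) := by
  unfold skewPow
  exact ((continuous_equiv_zpow T n).comp continuous_fst).prodMk
    (((continuous_cocycle T hf n).comp continuous_fst).mul continuous_snd)

lemma skewPow_skewPow (T : X ≃ₜ X) (f : X → G) (n m : ℤ) (p : X × G) :
    skewPow T f n (skewPow T f m p) = skewPow T f (n + m) p := by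
  unfold skewPow
  refine Prod.ext ?_ ?_
  · show (T.toEquiv ^ n) ((T.toEquiv ^ m) p.1) = (T.toEquiv ^ (n + m)) p.1
    rw [zpow_add, Equiv.Perm.mul_apply]
  · show cocycle T f n ((T.toEquiv ^ m) p.1) * (cocycle T f m p.1 * p.2)
        = cocycle T f (n + m) p.1 * p.2
    rw [cocycle_add', mul_assoc]

lemma orbitClosure_invariant [IsTopologicalGroup G] (T : X ≃ₜ X) {f : X → G} (hf : Continuous f)
    {p₀ q : X × G} (hq : q ∈ orbitClosure T f p₀) (n : ℤ) :
    skewPow T f n q ∈ orbitClosure T f p₀ := by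
  unfold orbitClosure at *
  have h1 : skewPow T f n '' (Set.range fun m : ℤ => skewPow T f m p₀)
      ⊆ Set.range fun m : ℤ => skewPow T f m p₀ := by
    rintro _ ⟨_, ⟨m, rfl⟩, rfl⟩
    exact ⟨n + m, (skewPow_skewPow T f n m p₀).symm⟩
  have h2 := image_closure_subset_closure_image (continuous_skewPow T hf n)
    (s := Set.range fun m : ℤ => skewPow T f m p₀)
  exact closure_mono h1 (h2 ⟨q, hq, rfl⟩)

lemma isClosed_stabSet [IsTopologicalGroup G] {C : Set (X × G)} (hC : IsClosed C) :
    IsClosed (stabSet C) := by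
  set S : Set G := {g : G | ∀ p ∈ C, (p.1, p.2 * g⁻¹) ∈ C} with hS
  have hSclosed : IsClosed S := by
    have h1 : S = ⋂ p ∈ C, (fun g : G => (p.1, p.2 * g⁻¹)) ⁻¹' C := by
      ext g; simp [hS]
    rw [h1]
    exact isClosed_biInter fun p _ =>
      hC.preimage (continuous_const.prodMk (continuous_const.mul continuous_inv))
  have hkey : stabSet C = S ∩ (fun g : G => g⁻¹) ⁻¹' S := by
    ext g
    constructor
    · intro hg
      have hg' : (fun p : X × G => (p.1, p.2 * g⁻¹)) '' C = C := hg
      constructor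
      · intro p hp
        rw [← hg']
        exact ⟨p, hp, rfl⟩
      · intro p hp
        rw [← hg'] at hp
        obtain ⟨q, hq, hqp⟩ := hp
        have hqp' : (q.1, q.2 * g⁻¹) = p := hqp
        have h1 : q.1 = p.1 := (Prod.ext_iff.1 hqp').1
        have h2 : q.2 * g⁻¹ = p.2 := (Prod.ext_iff.1 hqp').2

        have h3 : q.2 = p.2 * (g⁻¹)⁻¹ := by rw [← h2]; group
        have : q = (p.1, p.2 * (g⁻¹)⁻¹) := by rw [← h1, ← h3]
        rwa [← this]
    · rintro ⟨h1, h2⟩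
      apply Set.Subset.antisymm
      · rintro _ ⟨p, hp, rfl⟩
        exact h1 p hp
      · intro p hp
        refine ⟨(p.1, p.2 * (g⁻¹)⁻¹), h2 p hp, ?_⟩
        simp
  rw [hkey]
  exact hSclosed.inter (hSclosed.preimage continuous_inv)

lemma t2Space_quotient_of_isClosed {G : Type*} [TopologicalSpace G] [Group G]
    [IsTopologicalGroup G] (H : Subgroup G) (hH : IsClosed (H : Set G)) :
    T2Space (G ⧸ H) := by
  constructor
  intro q₁ q₂ hne
  obtain ⟨a, rfl⟩ := QuotientGroup.mk_surjective q₁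
  obtain ⟨b, rfl⟩ := QuotientGroup.mk_surjective q₂
  have hab : a⁻¹ * b ∈ (↑H : Set G)ᶜ := fun h => hne (QuotientGroup.eq.2 h)
  set W : Set G := (fun w : G => a⁻¹ * w * b) ⁻¹' (↑H : Set G)ᶜ with hWdef
  have hWopen : IsOpen W :=
    hH.isOpen_compl.preimage ((continuous_const.mul continuous_id).mul continuous_const)
  have h1W : (1 : G) ∈ W := by simpa [hWdef] using hab
  obtain ⟨V₀, hV₀o, h1V₀, hV₀⟩ := exists_open_nhds_one_mul_subset (hWopen.mem_nhds h1W)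
  set V : Set G := V₀ ∩ V₀⁻¹ with hVdef
  have hVo : IsOpen V := hV₀o.inter hV₀o.inv
  have h1V : (1 : G) ∈ V := ⟨h1V₀, by simpa using h1V₀⟩
  refine ⟨QuotientGroup.mk '' ((fun v => v * a) '' V),
    QuotientGroup.mk '' ((fun v => v * b) '' V), ?_, ?_, ?_, ?_, ?_⟩
  · exact QuotientGroup.isOpenMap_coe _ ((Homeomorph.mulRight a).isOpenMap _ hVo)
  · exact QuotientGroup.isOpenMap_coe _ ((Homeomorph.mulRight b).isOpenMap _ hVo)
  · exact ⟨a, ⟨1, h1V, one_mul a⟩, rfl⟩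
  · exact ⟨b, ⟨1, h1V, one_mul b⟩, rfl⟩
  · rw [Set.disjoint_left]
    rintro q ⟨_, ⟨v₁, hv₁, rfl⟩, rfl⟩ ⟨_, ⟨v₂, hv₂, rfl⟩, hq⟩
    have h1 : (v₂ * b : G ⧸ H) = (v₁ * a : G ⧸ H) := hq
    have h2 : (v₂ * b)⁻¹ * (v₁ * a) ∈ H := QuotientGroup.eq.1 h1
    have h3 : (v₁⁻¹ * v₂ : G) ∈ V₀ * V₀ := Set.mul_mem_mul (Set.mem_inv.1 hv₁.2) hv₂.1
    have h4 : a⁻¹ * (v₁⁻¹ * v₂) * b ∉ (H : Set G) := hV₀ h3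
    apply h4
    have h5 : a⁻¹ * (v₁⁻¹ * v₂) * b = ((v₂ * b)⁻¹ * (v₁ * a))⁻¹ := by group
    rw [h5]
    exact H.inv_mem h2

end Aux

theorem statement_17
    {X : Type*} [TopologicalSpace X] [CompactSpace X] [TopologicalSpace.MetrizableSpace X]
    {G : Type*} [TopologicalSpace G] [Group G] [IsTopologicalGroup G]
    [LocallyCompactSpace G] [SecondCountableTopology G] [T2Space G]
    (T : X ≃ₜ X) (hT : IsMinimal T) (f : X → G) (hf : Continuous f)
    (C : Set (X × G)) (hC : IsStronglyRegularOC T f C)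
    (H : Subgroup G) (hH : (H : Set G) = stabSet C) :
    ∃ γ : X → G ⧸ H, Continuous γ ∧
      (∀ x : X, {g : G | (x, g) ∈ C} =
        {g : G | (QuotientGroup.mk g : G ⧸ H) = γ x}) ∧
      (∀ x : X, ∀ g : G, (x, g) ∈ C →
        essRange T f x = (fun h => g * h * g⁻¹) '' (H : Set G)) := by
  classical
  rcases isEmpty_or_nonempty X with hX | hX
  · exact ⟨fun x => isEmptyElim x, continuous_iff_continuousAt.2 fun x => isEmptyElim x,
      fun x => isEmptyElim x, fun x => isEmptyElim x⟩
  obtain ⟨⟨p₀, hp₀⟩, hsurj, hsec⟩ := hC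
  choose gx hgx using hsec
  have hCclosed : IsClosed C := by rw [hp₀]; exact isClosed_closure
  have hHclosed : IsClosed (H : Set G) := by rw [hH]; exact isClosed_stabSet hCclosed
  haveI hT2Q : T2Space (G ⧸ H) := t2Space_quotient_of_isClosed H hHclosed
  -- section characterization
  have hsec' : ∀ x g, (x, g) ∈ C ↔ (QuotientGroup.mk g : G ⧸ H) = QuotientGroup.mk (gx x) := by
    intro x g
    constructor
    · intro hgC
      have h1 : g ∈ {gx x} * (H : Set G) := by
        rw [hH, ← hgx x]; exact hgC
      obtain ⟨a, ha, h, hh, rfl⟩ := h1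
      rw [Set.mem_singleton_iff] at ha
      subst ha
      rw [QuotientGroup.eq]
      have h2 : (gx x * h)⁻¹ * gx x = h⁻¹ := by group
      rw [h2]
      exact H.inv_mem hh
    · intro hq
      rw [QuotientGroup.eq] at hq
      have h1 : g ∈ {gx x} * (H : Set G) := by
        refine ⟨gx x, Set.mem_singleton _, (g⁻¹ * gx x)⁻¹, H.inv_mem hq, by group⟩
      rw [hH, ← hgx x] at h1
      exact h1
  set γ : X → G ⧸ H := fun x => QuotientGroup.mk (gx x) with hγdef
  have hγ : ∀ x g, (x, g) ∈ C → (QuotientGroup.mk g : G ⧸ H) = γ x :=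
    fun x g h => (hsec' x g).1 h
  have hgxC : ∀ x, (x, gx x) ∈ C := fun x => (hsec' x _).2 rfl
  -- invariance and equivariance
  have hinv : ∀ (q : X × G) (n : ℤ), q ∈ C → skewPow T f n q ∈ C := by
    intro q n hq
    rw [hp₀] at hq ⊢
    exact orbitClosure_invariant T hf hq n
  have hequi : ∀ (z : X) (n : ℤ), γ ((T.toEquiv ^ n) z) = cocycle T f n z • γ z := by
    intro z n
    have h1 : ((T.toEquiv ^ n) z, cocycle T f n z * gx z) ∈ C := hinv (z, gx z) n (hgxC z)
    have h2 := hγ _ _ h1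
    rw [← h2]
    rfl
  -- Baire category: γ is locally bounded somewhere
  set K : ℕ → Set G := compactCovering G with hKdef
  set A : ℕ → Set X := fun n => Prod.fst '' (C ∩ Set.univ ×ˢ K n) with hAdef
  have hAclosed : ∀ n, IsClosed (A n) := by
    intro n
    have hcpt : IsCompact (C ∩ Set.univ ×ˢ K n) :=
      (isCompact_univ.prod (isCompact_compactCovering G n)).inter_left hCclosed
    exact (hcpt.image continuous_fst).isClosed
  have hAcover : ⋃ n, A n = Set.univ := by
    ext z
    simp only [Set.mem_iUnion, Set.mem_univ, iff_true]
    have h1 : z ∈ Prod.fst '' C := by rw [hsurj]; exact Set.mem_univ z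
    obtain ⟨p, hp, rfl⟩ := h1
    obtain ⟨n, hn⟩ : ∃ n, p.2 ∈ K n := by
      have := Set.mem_univ p.2
      rw [← iUnion_compactCovering G] at this
      exact Set.mem_iUnion.1 this
    exact ⟨n, p, ⟨hp, Set.mem_univ _, hn⟩, rfl⟩
  obtain ⟨N, hN⟩ := nonempty_interior_of_iUnion_of_closed hAclosed hAcover
  set U₀ : Set X := interior (A N) with hU₀def
  -- graph of γ
  set π : X × G → X × (G ⧸ H) := fun p => (p.1, QuotientGroup.mk p.2) with hπdef
  have hπcont : Continuous π :=
    continuous_fst.prodMk (QuotientGroup.continuous_mk.comp continuous_snd)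
  have hπopen : IsOpenMap π := IsOpenMap.id.prodMap (QuotientGroup.isOpenMap_coe)
  have hgraph : π '' C = {q : X × (G ⧸ H) | q.2 = γ q.1} := by
    ext q
    constructor
    · rintro ⟨p, hp, rfl⟩
      exact hγ p.1 p.2 hp
    · intro hq
      refine ⟨(q.1, gx q.1), hgxC q.1, ?_⟩
      refine Prod.ext rfl ?_
      exact hq.symm
  have hsat : ∀ p : X × G, π p ∈ π '' C → p ∈ C := by
    rintro p ⟨p', hp', hpp⟩
    have h1 : p'.1 = p.1 := (Prod.ext_iff.1 hpp).1
    have h2 : (QuotientGroup.mk p'.2 : G ⧸ H) = QuotientGroup.mk p.2 :=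
      (Prod.ext_iff.1 hpp).2
    have h3 : (QuotientGroup.mk p.2 : G ⧸ H) = γ p.1 := by
      rw [← h2, hγ p'.1 p'.2 hp', h1]
    have := (hsec' p.1 p.2).2 h3
    rwa [Prod.mk.eta] at this
  have hgraphclosed : IsClosed (π '' C) := by
    rw [← isOpen_compl_iff]
    have hcompl : (π '' C)ᶜ = π '' Cᶜ := by
      ext q
      constructor
      · intro hq
        obtain ⟨g, hg⟩ := QuotientGroup.mk_surjective q.2
        have hpq : π (q.1, g) = q := Prod.ext rfl hg
        exact ⟨(q.1, g), fun hmem => hq (hpq ▸ ⟨(q.1, g), hmem, rfl⟩), hpq⟩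
      · rintro ⟨p, hp, rfl⟩ hmem
        exact hp (hsat p hmem)
    rw [hcompl]
    exact hπopen _ hCclosed.isOpen_compl
  -- continuity of γ on U₀
  set Q : Set (G ⧸ H) := QuotientGroup.mk '' K N with hQdef
  have hQcpt : IsCompact Q := (isCompact_compactCovering G N).image QuotientGroup.continuous_mk
  set Kc : Set (X × (G ⧸ H)) := π '' C ∩ Set.univ ×ˢ Q with hKcdef
  have hKccpt : IsCompact Kc := (isCompact_univ.prod hQcpt).inter_left hgraphclosed
  have hU₀mem : ∀ z ∈ U₀, (z, γ z) ∈ Kc := by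
    intro z hz
    obtain ⟨p, ⟨hpC, _, hpK⟩, hpz⟩ := interior_subset hz
    constructor
    · exact ⟨(z, gx z), hgxC z, rfl⟩
    · refine ⟨Set.mem_univ _, ?_⟩
      have h1 : (QuotientGroup.mk p.2 : G ⧸ H) = γ z := by
        rw [hγ p.1 p.2 hpC, hpz]
      rw [← h1]
      exact ⟨p.2, hpK, rfl⟩
  have hcontU₀ : ∀ w ∈ U₀, ContinuousAt γ w := by
    intro w hw
    have hpair : Tendsto (fun y => (y, γ y)) (𝓝 w) (𝓝 (w, γ w)) := by
      refine le_iff_ultrafilter.2 fun u hu => ?_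
      have hKc_mem : Kc ∈ u := by
        apply hu
        refine mem_map.2 (mem_of_superset (isOpen_interior.mem_nhds hw) ?_)
        exact fun z hz => hU₀mem z hz
      obtain ⟨q, hqKc, hq⟩ := hKccpt.ultrafilter_le_nhds u (le_principal_iff.2 hKc_mem)
      have hfst1 : Tendsto Prod.fst (u : Filter (X × (G ⧸ H))) (𝓝 q.1) :=
        (continuous_fst.tendsto q).mono_left hq
      have hfst2 : Tendsto Prod.fst (u : Filter (X × (G ⧸ H))) (𝓝 w) := by
        have h1 : Filter.map Prod.fst (u : Filter (X × (G ⧸ H)))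
            ≤ Filter.map Prod.fst (Filter.map (fun y => (y, γ y)) (𝓝 w)) :=
          Filter.map_mono hu
        rwa [Filter.map_map, show (Prod.fst ∘ fun y : X => (y, γ y)) = id from rfl,
          Filter.map_id] at h1
      have hq1 : q.1 = w := tendsto_nhds_unique hfst1 hfst2
      have hq2 : q.2 = γ w := by
        have h1 : q ∈ {r : X × (G ⧸ H) | r.2 = γ r.1} := hgraph ▸ hqKc.1
        rw [← hq1]; exact h1
      have hqq : q = (w, γ w) := Prod.ext hq1 hq2
      rwa [hqq] at hq
    exact (continuous_snd.tendsto (w, γ w)).comp hpair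
  -- global continuity via minimality
  have hcont : Continuous γ := by
    rw [continuous_iff_continuousAt]
    intro x
    obtain ⟨z, ⟨n, hzn⟩, hzU⟩ := (hT x).exists_mem_open isOpen_interior hN
    have hzU' : (T.toEquiv ^ n) x ∈ U₀ := by
      have hzn' : (T.toEquiv ^ n) x = z := hzn
      rwa [hzn']
    have hrw : γ = fun y => (cocycle T f n y)⁻¹ • γ ((T.toEquiv ^ n) y) := by
      funext y
      rw [hequi y n, inv_smul_smul]
    rw [hrw]
    refine ContinuousAt.fun_smul (X := G ⧸ H) ((continuous_cocycle T hf n).continuousAt).inv ?_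
    exact (hcontU₀ _ hzU').comp (continuous_equiv_zpow T n).continuousAt
  refine ⟨γ, hcont, fun x => Set.ext fun g => hsec' x g, ?_⟩
  -- essential range
  intro x g hxg
  have hγx : γ x = QuotientGroup.mk g := (hγ _ _ hxg).symm
  ext k
  constructor
  · -- essRange ⊆ conjugate of H
    intro hk
    obtain ⟨bX, hbX⟩ := (𝓝 x).exists_antitone_basis
    obtain ⟨bG, hbG⟩ := (𝓝 (1 : G)).exists_antitone_basis
    have hchoice : ∀ i : ℕ, ∃ (n : ℤ) (y : X) (v : G),
        y ∈ bX i ∧ (T.toEquiv ^ n) y ∈ bX i ∧ v ∈ bG i ∧ cocycle T f n y = v * k := by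
      intro i
      obtain ⟨U, hUsub, hUopen, hxU⟩ := mem_nhds_iff.1 (hbX.mem i)
      obtain ⟨V, hVsub, hVopen, h1V⟩ := mem_nhds_iff.1 (hbG.mem i)
      obtain ⟨n, y, hy, hTy, v, hv, hcv⟩ := hk U hUopen hxU V hVopen h1V
      exact ⟨n, y, v, hUsub hy, hUsub hTy, hVsub hv, hcv⟩
    choose nn yy vv h1 h2 h3 h4 using hchoice
    have hyx : Tendsto yy atTop (𝓝 x) := hbX.tendsto h1
    have hTyx : Tendsto (fun i => (T.toEquiv ^ nn i) (yy i)) atTop (𝓝 x) := hbX.tendsto h2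
    have hv1 : Tendsto vv atTop (𝓝 (1 : G)) := hbG.tendsto h3
    have heq : ∀ i, γ ((T.toEquiv ^ nn i) (yy i)) = (vv i * k) • γ (yy i) := by
      intro i
      rw [hequi (yy i) (nn i), h4 i]
    have hlim1 : Tendsto (fun i => γ ((T.toEquiv ^ nn i) (yy i))) atTop (𝓝 (γ x)) :=
      (hcont.tendsto x).comp hTyx
    have hlim2 : Tendsto (fun i => (vv i * k) • γ (yy i)) atTop (𝓝 ((1 * k) • γ x)) :=
      (hv1.mul tendsto_const_nhds).smul ((hcont.tendsto x).comp hyx)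
    have hkey : γ x = (1 * k) • γ x := tendsto_nhds_unique (hlim1.congr heq) hlim2
    rw [one_mul, hγx] at hkey
    have hks : (k • (QuotientGroup.mk g : G ⧸ H)) = QuotientGroup.mk (k * g) := rfl
    rw [hks] at hkey
    have hmem : g⁻¹ * (k * g) ∈ H := QuotientGroup.eq.1 hkey
    exact ⟨g⁻¹ * (k * g), hmem, by group⟩
  · -- conjugate of H ⊆ essRange
    rintro ⟨h, hh, rfl⟩
    intro U hUopen hxU V hVopen h1V
    obtain ⟨V₁, hV₁open, h1V₁, hV₁V⟩ := exists_open_nhds_one_mul_subset (hVopen.mem_nhds h1V)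
    have hgh : (x, g * h) ∈ C := by
      have hinvmem : h⁻¹ ∈ stabSet C := by rw [← hH]; exact H.inv_mem hh
      have himg : (fun p : X × G => (p.1, p.2 * (h⁻¹)⁻¹)) '' C = C := hinvmem
      rw [← himg]
      exact ⟨(x, g), hxg, by simp⟩
    set W : Set G := (fun w : G => (g * h) * w⁻¹ * (g * h)⁻¹) ⁻¹' V₁ with hWdef
    have hWopen : IsOpen W :=
      hV₁open.preimage (((continuous_const.mul continuous_inv).mul continuous_const))
    have h1W : (1 : G) ∈ W := by simpa [hWdef, mul_assoc] using h1V₁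
    -- approximate (x, g*h)
    have hmem2 : (x, g * h) ∈ closure (Set.range fun m : ℤ => skewPow T f m p₀) := by
      rw [← orbitClosure, ← hp₀]; exact hgh
    have hO₂open : IsOpen (U ×ˢ {c : G | c * (g * h)⁻¹ ∈ V₁}) :=
      hUopen.prod (hV₁open.preimage (continuous_id.mul continuous_const))
    have hx₂ : (x, g * h) ∈ U ×ˢ {c : G | c * (g * h)⁻¹ ∈ V₁} :=
      ⟨hxU, by simpa [mul_assoc] using h1V₁⟩
    obtain ⟨q₂, hq₂o, hq₂r⟩ := mem_closure_iff.1 hmem2 _ hO₂open hx₂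
    obtain ⟨n₂, rfl⟩ := hq₂r
    -- approximate (x, g)
    have hmem1 : (x, g) ∈ closure (Set.range fun m : ℤ => skewPow T f m p₀) := by
      rw [← orbitClosure, ← hp₀]; exact hxg
    have hO₁open : IsOpen (U ×ˢ {c : G | g⁻¹ * c ∈ W}) :=
      hUopen.prod (hWopen.preimage (continuous_const.mul continuous_id))
    have hx₁ : (x, g) ∈ U ×ˢ {c : G | g⁻¹ * c ∈ W} := ⟨hxU, by simpa using h1W⟩
    obtain ⟨q₁, hq₁o, hq₁r⟩ := mem_closure_iff.1 hmem1 _ hO₁open hx₁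
    obtain ⟨n₁, rfl⟩ := hq₁r
    -- assemble
    set x₀ := p₀.1
    set g₀ := p₀.2
    have hy₂U : (T.toEquiv ^ n₂) x₀ ∈ U := hq₂o.1
    have hy₁U : (T.toEquiv ^ n₁) x₀ ∈ U := hq₁o.1
    have hv₁ : cocycle T f n₂ x₀ * g₀ * (g * h)⁻¹ ∈ V₁ := hq₂o.2
    have hw : g⁻¹ * (cocycle T f n₁ x₀ * g₀) ∈ W := hq₁o.2
    have hwV₁ : (g * h) * (g⁻¹ * (cocycle T f n₁ x₀ * g₀))⁻¹ * (g * h)⁻¹ ∈ V₁ := hw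
    refine ⟨n₂ - n₁, (T.toEquiv ^ n₁) x₀, hy₁U, ?_, ?_⟩
    · have h5 : (T.toEquiv ^ (n₂ - n₁)) ((T.toEquiv ^ n₁) x₀) = (T.toEquiv ^ n₂) x₀ := by
        rw [← Equiv.Perm.mul_apply, ← zpow_add, sub_add_cancel]
      rwa [h5]
    · refine ⟨(cocycle T f n₂ x₀ * g₀ * (g * h)⁻¹) *
        ((g * h) * (g⁻¹ * (cocycle T f n₁ x₀ * g₀))⁻¹ * (g * h)⁻¹),
        hV₁V (Set.mul_mem_mul hv₁ hwV₁), ?_⟩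
      have hco : cocycle T f n₂ x₀ = cocycle T f (n₂ - n₁) ((T.toEquiv ^ n₁) x₀)
          * cocycle T f n₁ x₀ := by
        have := cocycle_add' T f (n₂ - n₁) n₁ x₀
        rwa [sub_add_cancel] at this
      have hcy : cocycle T f (n₂ - n₁) ((T.toEquiv ^ n₁) x₀)
          = cocycle T f n₂ x₀ * (cocycle T f n₁ x₀)⁻¹ := by
        rw [hco]; group
      rw [hcy]
      group
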